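/- arXiv:2204.06431 — 3 statements merged into one kernel-verified Lean document; each statement's English description precedes it below -/
import Mathlib

section
/- The junction Riemann problem linear system for three pipes meeting at a vertex—namely q¹* = q²* + q³*, ρ¹* = ρ²*, ρ¹* = ρ³*, ρ¹* - ρ¹₀ + (q¹* - q¹₀)/a = 0, ρ²* - ρ²₀ - (q²* - q²₀)/a = 0, ρ³* - ρ³₀ - (q³* - q³₀)/a = 0—has a unique solution (ρ¹*, ρ²*, ρ³*, q¹*, q²*, q³*) for any initial data (ρᵏ₀, qᵏ₀), k=1,2,3, and any a > 0. -/
/-- The junction Riemann problem for three pipes meeting at a vertex has a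
unique solution for any initial data and any wave speed `a > 0`. -/
theorem junction_riemann_problem_unique_solution
    (a : ℝ) (ha : 0 < a) (ρ10 ρ20 ρ30 q10 q20 q30 : ℝ) :
    ∃! s : ℝ × ℝ × ℝ × ℝ × ℝ × ℝ,
      let (ρ1, ρ2, ρ3, q1, q2, q3) := s
      q1 = q2 + q3 ∧
      a^2 * ρ1 = a^2 * ρ2 ∧
      a^2 * ρ1 = a^2 * ρ3 ∧
      ρ1 - ρ10 + (q1 - q10) / a = 0 ∧
      ρ2 - ρ20 - (q2 - q20) / a = 0 ∧
      ρ3 - ρ30 - (q3 - q30) / a = 0 := by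
  have ha' : a ≠ 0 := ne_of_gt ha
  set ρ : ℝ := ((q10 - q20 - q30) / a + ρ10 + ρ20 + ρ30) / 3 with hρ
  refine ⟨(ρ, ρ, ρ, q10 - a * (ρ - ρ10), q20 + a * (ρ - ρ20), q30 + a * (ρ - ρ30)), ?_, ?_⟩
  · refine ⟨?_, rfl, rfl, ?_, ?_, ?_⟩ <;> field_simp [hρ] <;> (rw [hρ]; field_simp; ring)
  · rintro ⟨r1, r2, r3, p1, p2, p3⟩ ⟨h1, h2, h3, h4, h5, h6⟩
    have ha2 : (a:ℝ)^2 ≠ 0 := pow_ne_zero _ ha'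
    have e2 : r1 = r2 := by
      have := mul_left_cancel₀ ha2 h2; exact this
    have e3 : r1 = r3 := mul_left_cancel₀ ha2 h3
    subst e2 e3
    have h4' : p1 = q10 - a * (r1 - ρ10) := by field_simp at h4; linarith
    have h5' : p2 = q20 + a * (r1 - ρ20) := by field_simp at h5; linarith
    have h6' : p3 = q30 + a * (r1 - ρ30) := by field_simp at h6; linarith
    have hr : r1 = ρ := by
      rw [h4', h5', h6'] at h1
      rw [hρ]
      field_simp
      linear_combination -h1
    subst hr
    simp [h4', h5', h6']
end

section
/- If the cell-average data is monotone nondecreasing (U_{i-1} ≤ U_i ≤ U_{i+1} for all i), then the minmod-reconstructed piecewise linear function is globally nondecreasing; in particular the left interface value of cell i+1 is ≥ the right interface value of cell i: U_i + (Δx/2)σ_i ≤ U_{i+1} - (Δx/2)σ_{i+1}. -/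
/-- The minmod limiter. -/
noncomputable def minmod (a₁ a₂ : ℝ) : ℝ :=
  if Real.sign a₁ = Real.sign a₂ then Real.sign a₁ * min |a₁| |a₂| else 0

lemma minmod_bounds {a b : ℝ} (ha : 0 ≤ a) (hb : 0 ≤ b) :
    0 ≤ minmod a b ∧ minmod a b ≤ a ∧ minmod a b ≤ b := by
  unfold minmod
  split_ifs with h
  · rcases eq_or_lt_of_le ha with h0 | h0
    · rw [← h0, Real.sign_zero]
      simp [ha, hb]
    · rw [Real.sign_of_pos h0, one_mul, abs_of_nonneg ha, abs_of_nonneg hb]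
      exact ⟨le_min ha hb, min_le_left _ _, min_le_right _ _⟩
  · exact ⟨le_refl 0, ha, hb⟩

/-- If the cell averages are monotone nondecreasing, then the minmod
reconstruction is globally nondecreasing: the slopes are nonnegative and the
left interface value of cell `i+1` dominates the right interface value of
cell `i`. -/
theorem minmod_reconstruction_monotone (Δx : ℝ) (hΔx : 0 < Δx)
    (U : ℤ → ℝ) (hmono : ∀ i : ℤ, U i ≤ U (i + 1))
    (σ : ℤ → ℝ)
    (hσ : ∀ i : ℤ, σ i = minmod ((U i - U (i - 1)) / Δx) ((U (i + 1) - U i) / Δx)) :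
    (∀ i : ℤ, 0 ≤ σ i) ∧
    (∀ i : ℤ, U i + (Δx / 2) * σ i ≤ U (i + 1) - (Δx / 2) * σ (i + 1)) := by
  have key : ∀ i : ℤ, 0 ≤ σ i ∧ σ i ≤ (U i - U (i - 1)) / Δx ∧
      σ i ≤ (U (i + 1) - U i) / Δx := by
    intro i
    have h1 : 0 ≤ (U i - U (i - 1)) / Δx := by
      have := hmono (i - 1)
      simp only [sub_add_cancel] at this
      exact div_nonneg (by linarith) hΔx.le
    have h2 : 0 ≤ (U (i + 1) - U i) / Δx :=
      div_nonneg (by linarith [hmono i]) hΔx.le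
    rw [hσ i]
    exact minmod_bounds h1 h2
  refine ⟨fun i => (key i).1, fun i => ?_⟩
  have hr : σ i ≤ (U (i + 1) - U i) / Δx := (key i).2.2
  have hl : σ (i + 1) ≤ (U (i + 1) - U i) / Δx := by
    have := (key (i + 1)).2.1
    simpa using this
  have h1 : Δx * σ i ≤ U (i + 1) - U i := by
    rw [← le_div_iff₀' hΔx]; exact hr
  have h2 : Δx * σ (i + 1) ≤ U (i + 1) - U i := by
    rw [← le_div_iff₀' hΔx]; exact hl
  nlinarith [(key i).1, (key (i + 1)).1]
end

section
/- The total variation of the minmod-limited piecewise linear reconstruction does not exceed the total variation of the cell averages: for a finite sequence U_1,…,U_N with slopes σ_i = minmod((U_i − U_{i−1})/Δx, (U_{i+1} − U_i)/Δx) (with σ_1 = σ_N = 0), the reconstructed piecewise linear function Ũ(x) = U_i + σ_i(x − x_i) on cell i satisfies TV(Ũ) ≤ ∑_{i=1}^{N−1} |U_{i+1} − U_i|. -/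
/-- `minmod a b` lies between `0` and `a`, and between `0` and `b`. -/
lemma minmod_hull (a b : ℝ) :
    min 0 a ≤ minmod a b ∧ minmod a b ≤ max 0 a ∧
    min 0 b ≤ minmod a b ∧ minmod a b ≤ max 0 b := by
  unfold minmod
  split_ifs with h
  · rcases lt_trichotomy a 0 with ha | rfl | ha
    · rw [Real.sign_of_neg ha] at h
      have hb : b < 0 := by
        rcases lt_trichotomy b 0 with hb | rfl | hb
        · exact hb
        · rw [Real.sign_zero] at h; norm_num at h
        · rw [Real.sign_of_pos hb] at h; norm_num at h
      rw [Real.sign_of_neg ha, abs_of_neg ha, abs_of_neg hb]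
      have hmin : min (-a) (-b) ≤ -a := min_le_left _ _
      have hmin' : min (-a) (-b) ≤ -b := min_le_right _ _
      have hmin0 : (0:ℝ) ≤ min (-a) (-b) := le_min (by linarith) (by linarith)
      rw [min_eq_right ha.le, max_eq_left ha.le, min_eq_right hb.le, max_eq_left hb.le]
      exact ⟨by linarith, by linarith, by linarith, by linarith⟩
    · rw [Real.sign_zero]
      refine ⟨?_, ?_, ?_, ?_⟩ <;> simp [min_le_iff, le_max_iff, le_total]
    · rw [Real.sign_of_pos ha] at h
      have hb : 0 < b := by
        rcases lt_trichotomy b 0 with hb | rfl | hb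
        · rw [Real.sign_of_neg hb] at h; norm_num at h
        · rw [Real.sign_zero] at h; norm_num at h
        · exact hb
      rw [Real.sign_of_pos ha, abs_of_pos ha, abs_of_pos hb]
      have hmin : min a b ≤ a := min_le_left _ _
      have hmin' : min a b ≤ b := min_le_right _ _
      have hmin0 : (0:ℝ) ≤ min a b := le_min ha.le hb.le
      rw [min_eq_left ha.le, max_eq_right ha.le, min_eq_left hb.le, max_eq_right hb.le]
      exact ⟨by linarith, by linarith, by linarith, by linarith⟩
  · refine ⟨?_, ?_, ?_, ?_⟩ <;> simp [min_le_iff, le_max_iff, le_total]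

/-- Scaling a hull membership by a positive constant. -/
lemma hull_scale (b m c : ℝ) (hc : 0 < c) (h1 : min 0 b ≤ m) (h2 : m ≤ max 0 b) :
    min 0 (b * c) ≤ m * c ∧ m * c ≤ max 0 (b * c) := by
  rcases le_total 0 b with hb | hb
  · have hbc : 0 ≤ b * c := mul_nonneg hb hc.le
    simp only [min_eq_left hb, max_eq_right hb] at h1 h2
    rw [min_eq_left hbc, max_eq_right hbc]
    constructor
    · exact mul_nonneg h1 hc.le
    · exact mul_le_mul_of_nonneg_right h2 hc.le
  · have hbc : b * c ≤ 0 := mul_nonpos_of_nonpos_of_nonneg hb hc.le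
    simp only [min_eq_right hb, max_eq_left hb] at h1 h2
    rw [min_eq_right hbc, max_eq_left hbc]
    constructor
    · exact mul_le_mul_of_nonneg_right h1 hc.le
    · exact mul_nonpos_of_nonpos_of_nonneg h2 hc.le

lemma jump_bound (D s t : ℝ) (hs1 : min 0 D ≤ s) (hs2 : s ≤ max 0 D)
    (ht1 : min 0 D ≤ t) (ht2 : t ≤ max 0 D) :
    |s| / 2 + |t| / 2 + |D - t / 2 - s / 2| ≤ |D| := by
  rcases le_total 0 D with hD | hD
  · simp only [min_eq_left hD, max_eq_right hD] at hs1 hs2 ht1 ht2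
    rw [abs_of_nonneg hD, abs_of_nonneg hs1, abs_of_nonneg ht1,
      abs_of_nonneg (by linarith)]
    linarith
  · simp only [min_eq_right hD, max_eq_left hD] at hs1 hs2 ht1 ht2
    rw [abs_of_nonpos hD, abs_of_nonpos hs2, abs_of_nonpos ht2,
      abs_of_nonpos (by linarith)]
    linarith

/-- The total variation of the minmod-limited piecewise linear reconstruction
(sum of in-cell variations `|σ_i| Δx` plus interface jumps) does not exceed
the total variation of the cell averages. -/
theorem minmod_reconstruction_TVD (Δx : ℝ) (hΔx : 0 < Δx) (N : ℕ) (hN : 2 ≤ N)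
    (U : ℕ → ℝ) (σ : ℕ → ℝ)
    (hσ0 : σ 0 = 0) (hσN : σ (N - 1) = 0)
    (hσ : ∀ i, 0 < i → i < N - 1 →
      σ i = minmod ((U i - U (i - 1)) / Δx) ((U (i + 1) - U i) / Δx)) :
    (∑ i ∈ Finset.range N, |σ i| * Δx)
      + (∑ i ∈ Finset.range (N - 1),
          |(U (i + 1) - σ (i + 1) * Δx / 2) - (U i + σ i * Δx / 2)|)
    ≤ ∑ i ∈ Finset.range (N - 1), |U (i + 1) - U i| := by
  obtain ⟨n, rfl⟩ : ∃ n, N = n + 2 := ⟨N - 2, by omega⟩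
  have hn1 : n + 2 - 1 = n + 1 := by omega
  rw [hn1] at hσN hσ ⊢
  have hdiv : ∀ x : ℝ, x / Δx * Δx = x := fun x => div_mul_cancel₀ x hΔx.ne'
  -- hull bound of σ i * Δx w.r.t. the right difference, for i ≤ n
  have H : ∀ i ≤ n, min 0 (U (i+1) - U i) ≤ σ i * Δx ∧
      σ i * Δx ≤ max 0 (U (i+1) - U i) := by
    intro i hi
    rcases Nat.eq_zero_or_pos i with rfl | hpos
    · rw [hσ0]; simp [min_le_iff, le_max_iff, le_total]
    · rw [hσ i hpos (by omega)]
      obtain ⟨-, -, h1, h2⟩ := minmod_hull ((U i - U (i - 1)) / Δx) ((U (i + 1) - U i) / Δx)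
      have := hull_scale ((U (i + 1) - U i) / Δx) _ Δx hΔx h1 h2
      rwa [hdiv] at this
  -- hull bound of σ (i+1) * Δx w.r.t. the left difference, for i ≤ n
  have H' : ∀ i ≤ n, min 0 (U (i+1) - U i) ≤ σ (i+1) * Δx ∧
      σ (i+1) * Δx ≤ max 0 (U (i+1) - U i) := by
    intro i hi
    rcases Nat.eq_or_lt_of_le hi with rfl | hlt
    · rw [hσN]; simp [min_le_iff, le_max_iff, le_total]
    · rw [hσ (i+1) (by omega) (by omega)]
      have e : i + 1 - 1 = i := rfl
      rw [e]
      obtain ⟨h1, h2, -, -⟩ := minmod_hull ((U (i+1) - U i) / Δx) ((U (i + 2) - U (i+1)) / Δx)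
      have := hull_scale ((U (i + 1) - U i) / Δx) _ Δx hΔx h1 h2
      rwa [hdiv] at this
  have eabs : ∀ i, |σ i| * Δx = |σ i * Δx| := fun i => by
    rw [abs_mul, abs_of_pos hΔx]
  simp only [eabs]
  -- redistribute the cell sum onto interfaces
  have hsplit : (∑ i ∈ Finset.range (n+2), |σ i * Δx|)
      = ∑ i ∈ Finset.range (n+1), (|σ i * Δx| / 2 + |σ (i+1) * Δx| / 2) := by
    rw [Finset.sum_add_distrib]
    have A : (∑ i ∈ Finset.range (n+2), |σ i * Δx|)
        = ∑ i ∈ Finset.range (n+1), |σ i * Δx| := by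
      rw [Finset.sum_range_succ, hσN]; simp
    have B : (∑ i ∈ Finset.range (n+2), |σ i * Δx|)
        = ∑ i ∈ Finset.range (n+1), |σ (i+1) * Δx| := by
      rw [Finset.sum_range_succ', hσ0]; simp
    rw [← Finset.sum_div, ← Finset.sum_div, ← A, ← B]
    ring
  rw [hsplit, ← Finset.sum_add_distrib]
  refine Finset.sum_le_sum fun i hi => ?_
  have hi' : i ≤ n := by
    have := Finset.mem_range.mp hi; omega
  obtain ⟨hs1, hs2⟩ := H i hi'
  obtain ⟨ht1, ht2⟩ := H' i hi'
  have hjb := jump_bound (U (i+1) - U i) (σ i * Δx) (σ (i+1) * Δx) hs1 hs2 ht1 ht2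
  have harg : (U (i + 1) - σ (i + 1) * Δx / 2) - (U i + σ i * Δx / 2)
      = (U (i+1) - U i) - σ (i+1) * Δx / 2 - σ i * Δx / 2 := by ring
  rw [harg]
  exact hjb
end
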